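/- Let R, l > 0 and let u be a unit vector in three-dimensional Euclidean space (EuclideanSpace ℝ (Fin 3), ‖u‖ = 1). Let N = ∫ over x ∈ ℝ³ of the one-dimensional Lebesgue measure of {t ∈ [0, l] : x + t·u ∈ closedBall 0 R}, and let D = the Lebesgue measure of {x | ∃ t ∈ [0, l], x + t·u ∈ closedBall 0 R}. Then N/D = (1/l + 3/(4R))⁻¹; that is, the mean length ⟨L⟩ traversed inside the ball by uniformly placed segments of length l satisfies 1/⟨L⟩ = 1/l + 1/⟨σ⟩ with mean chord ⟨σ⟩ = 4R/3. -/

import Mathlib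

open Metric MeasureTheory Set

section CauchyAux

/-- Key 1D interval lemma: description of the set of `z` hit by a shifted square condition. -/
lemma cauchy_exists_shift_sq_le {l w z : ℝ} (hl : 0 ≤ l) :
    (∃ t ∈ Set.Icc (0:ℝ) l, (z + t)^2 ≤ w) ↔
      0 ≤ w ∧ -(l + Real.sqrt w) ≤ z ∧ z ≤ Real.sqrt w := by
  constructor
  · rintro ⟨t, ⟨ht0, htl⟩, h⟩
    have hw : 0 ≤ w := le_trans (sq_nonneg _) h
    have habs : |z + t| ≤ Real.sqrt w := by
      rw [← Real.sqrt_sq_eq_abs]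
      exact Real.sqrt_le_sqrt h
    rw [abs_le] at habs
    exact ⟨hw, by linarith [habs.1, habs.2], by linarith [habs.1, habs.2]⟩
  · rintro ⟨hw, h1, h2⟩
    have hc0 : 0 ≤ Real.sqrt w := Real.sqrt_nonneg w
    refine ⟨max 0 (-z - Real.sqrt w), ⟨le_max_left _ _, max_le hl (by linarith)⟩, ?_⟩
    have hzt : z + max 0 (-z - Real.sqrt w) = max z (-Real.sqrt w) := by
      rw [← max_add_add_left]
      congr 1 <;> ring
    rw [hzt]
    have hle : max z (-Real.sqrt w) ≤ Real.sqrt w := max_le h2 (by linarith)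
    have hge : -Real.sqrt w ≤ max z (-Real.sqrt w) := le_max_right _ _
    calc (max z (-Real.sqrt w))^2 ≤ (Real.sqrt w)^2 := sq_le_sq' hge hle
    _ = w := Real.sq_sqrt hw

lemma cauchy_slab_eq (R l : ℝ) (hl : 0 ≤ l) :
    {p : ℝ × (Fin 2 → ℝ) | ∃ t ∈ Set.Icc (0:ℝ) l,
        (p.1 + t)^2 + ((p.2 0)^2 + (p.2 1)^2) ≤ R^2}
    = {p : ℝ × (Fin 2 → ℝ) | (p.2 0)^2 + (p.2 1)^2 ≤ R^2 ∧
        -(l + Real.sqrt (R^2 - ((p.2 0)^2 + (p.2 1)^2))) ≤ p.1 ∧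
        p.1 ≤ Real.sqrt (R^2 - ((p.2 0)^2 + (p.2 1)^2))} := by
  ext p
  simp only [Set.mem_setOf_eq]
  rw [show (∃ t ∈ Set.Icc (0:ℝ) l, (p.1 + t)^2 + ((p.2 0)^2 + (p.2 1)^2) ≤ R^2)
      ↔ (∃ t ∈ Set.Icc (0:ℝ) l, (p.1 + t)^2 ≤ R^2 - ((p.2 0)^2 + (p.2 1)^2)) from
    exists_congr fun t => and_congr_right fun _ =>
      ⟨fun h => by linarith, fun h => by linarith⟩,
    cauchy_exists_shift_sq_le hl]
  constructor
  · rintro ⟨h, h1, h2⟩; exact ⟨by linarith, h1, h2⟩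
  · rintro ⟨h, h1, h2⟩; exact ⟨by linarith, h1, h2⟩

lemma cauchy_F_measurable : Measurable fun y : Fin 2 → ℝ => (y 0)^2 + (y 1)^2 :=
  ((measurable_pi_apply 0).pow_const 2).add ((measurable_pi_apply 1).pow_const 2)

lemma cauchy_disk_measurable (R : ℝ) :
    MeasurableSet {y : Fin 2 → ℝ | (y 0)^2 + (y 1)^2 ≤ R^2} :=
  measurableSet_le cauchy_F_measurable measurable_const

lemma cauchy_slab_measurable' (R l : ℝ) :
    MeasurableSet {p : ℝ × (Fin 2 → ℝ) | (p.2 0)^2 + (p.2 1)^2 ≤ R^2 ∧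
        -(l + Real.sqrt (R^2 - ((p.2 0)^2 + (p.2 1)^2))) ≤ p.1 ∧
        p.1 ≤ Real.sqrt (R^2 - ((p.2 0)^2 + (p.2 1)^2))} := by
  have hF : Measurable fun p : ℝ × (Fin 2 → ℝ) => (p.2 0)^2 + (p.2 1)^2 :=
    cauchy_F_measurable.comp measurable_snd
  have hc : Measurable fun p : ℝ × (Fin 2 → ℝ) =>
      Real.sqrt (R^2 - ((p.2 0)^2 + (p.2 1)^2)) :=
    (measurable_const.sub hF).sqrt
  exact (measurableSet_le hF measurable_const).inter
    ((measurableSet_le ((measurable_const.add hc).neg) measurable_fst).inter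
      (measurableSet_le measurable_fst hc))

lemma cauchy_slab_measurable (R l : ℝ) (hl : 0 ≤ l) :
    MeasurableSet {p : ℝ × (Fin 2 → ℝ) | ∃ t ∈ Set.Icc (0:ℝ) l,
        (p.1 + t)^2 + ((p.2 0)^2 + (p.2 1)^2) ≤ R^2} := by
  rw [cauchy_slab_eq R l hl]
  exact cauchy_slab_measurable' R l

lemma cauchy_measure_slab (R l : ℝ) (hl : 0 ≤ l) :
    volume {p : ℝ × (Fin 2 → ℝ) | ∃ t ∈ Set.Icc (0:ℝ) l,
        (p.1 + t)^2 + ((p.2 0)^2 + (p.2 1)^2) ≤ R^2}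
    = ∫⁻ y : Fin 2 → ℝ, Set.indicator {y : Fin 2 → ℝ | (y 0)^2 + (y 1)^2 ≤ R^2}
        (fun y => ENNReal.ofReal (l + 2 * Real.sqrt (R^2 - ((y 0)^2 + (y 1)^2)))) y := by
  rw [cauchy_slab_eq R l hl, Measure.volume_eq_prod,
    Measure.prod_apply_symm (cauchy_slab_measurable' R l)]
  refine lintegral_congr fun y => ?_
  by_cases hy : (y 0)^2 + (y 1)^2 ≤ R^2
  · have hpre : ((fun x => (x, y)) ⁻¹' {p : ℝ × (Fin 2 → ℝ) | (p.2 0)^2 + (p.2 1)^2 ≤ R^2 ∧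
        -(l + Real.sqrt (R^2 - ((p.2 0)^2 + (p.2 1)^2))) ≤ p.1 ∧
        p.1 ≤ Real.sqrt (R^2 - ((p.2 0)^2 + (p.2 1)^2))})
        = Set.Icc (-(l + Real.sqrt (R^2 - ((y 0)^2 + (y 1)^2))))
            (Real.sqrt (R^2 - ((y 0)^2 + (y 1)^2))) := by
      ext z
      simp only [Set.mem_preimage, Set.mem_setOf_eq, Set.mem_Icc, hy, true_and]
    rw [hpre, Real.volume_Icc,
      Set.indicator_of_mem (show y ∈ {y : Fin 2 → ℝ | (y 0)^2 + (y 1)^2 ≤ R^2} from hy)]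
    congr 1
    ring
  · have hpre : ((fun x => (x, y)) ⁻¹' {p : ℝ × (Fin 2 → ℝ) | (p.2 0)^2 + (p.2 1)^2 ≤ R^2 ∧
        -(l + Real.sqrt (R^2 - ((p.2 0)^2 + (p.2 1)^2))) ≤ p.1 ∧
        p.1 ≤ Real.sqrt (R^2 - ((p.2 0)^2 + (p.2 1)^2))}) = ∅ := by
      ext z
      simp only [Set.mem_preimage, Set.mem_setOf_eq, Set.mem_empty_iff_false, iff_false]
      rintro ⟨h, -⟩
      exact hy h
    rw [hpre, measure_empty,
      Set.indicator_of_notMem (show y ∉ {y : Fin 2 → ℝ | (y 0)^2 + (y 1)^2 ≤ R^2} from hy)]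

lemma cauchy_norm_sq (R : ℝ) (hR : 0 < R) (v : EuclideanSpace ℝ (Fin 3)) :
    v ∈ closedBall (0 : EuclideanSpace ℝ (Fin 3)) R ↔
      (v 0)^2 + ((v 1)^2 + (v 2)^2) ≤ R^2 := by
  rw [mem_closedBall_zero_iff]
  have hnorm : ‖v‖ = Real.sqrt ((v 0)^2 + ((v 1)^2 + (v 2)^2)) := by
    rw [EuclideanSpace.norm_eq]
    congr 1
    simp [Fin.sum_univ_three, sq_abs]
    ring
  rw [hnorm]
  constructor
  · intro h
    calc (v 0)^2 + ((v 1)^2 + (v 2)^2)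
        = (Real.sqrt ((v 0)^2 + ((v 1)^2 + (v 2)^2)))^2 := (Real.sq_sqrt (by positivity)).symm
      _ ≤ R^2 := pow_le_pow_left₀ (Real.sqrt_nonneg _) h 2
  · intro h
    calc Real.sqrt ((v 0)^2 + ((v 1)^2 + (v 2)^2)) ≤ Real.sqrt (R^2) := Real.sqrt_le_sqrt h
      _ = R := Real.sqrt_sq hR.le

lemma cauchy_volume_tube (R l : ℝ) (hR : 0 < R) (hl : 0 ≤ l) :
    volume {x : EuclideanSpace ℝ (Fin 3) | ∃ t ∈ Set.Icc (0:ℝ) l,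
        x + t • EuclideanSpace.single (0 : Fin 3) (1:ℝ)
          ∈ closedBall (0 : EuclideanSpace ℝ (Fin 3)) R}
    = volume {p : ℝ × (Fin 2 → ℝ) | ∃ t ∈ Set.Icc (0:ℝ) l,
        (p.1 + t)^2 + ((p.2 0)^2 + (p.2 1)^2) ≤ R^2} := by
  have hcomp := (volume_preserving_piFinSuccAbove (fun _ : Fin 3 => ℝ) 0).comp
    (EuclideanSpace.volume_preserving_symm_measurableEquiv_toLp (ι := Fin 3))
  have hpre : {x : EuclideanSpace ℝ (Fin 3) | ∃ t ∈ Set.Icc (0:ℝ) l,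
      x + t • EuclideanSpace.single (0 : Fin 3) (1:ℝ)
        ∈ closedBall (0 : EuclideanSpace ℝ (Fin 3)) R}
      = ((⇑(MeasurableEquiv.piFinSuccAbove (fun _ : Fin 3 => ℝ) 0)) ∘
          (⇑(MeasurableEquiv.toLp 2 (Fin 3 → ℝ)).symm)) ⁻¹'
        {p : ℝ × (Fin 2 → ℝ) | ∃ t ∈ Set.Icc (0:ℝ) l,
          (p.1 + t)^2 + ((p.2 0)^2 + (p.2 1)^2) ≤ R^2} := by
    ext x
    simp only [Set.mem_setOf_eq, Set.mem_preimage, Function.comp_apply]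
    refine exists_congr fun t => and_congr_right fun _ => ?_
    rw [cauchy_norm_sq R hR]
    have h0 : (x + t • EuclideanSpace.single (0 : Fin 3) (1:ℝ)) 0 = x 0 + t := by
      simp [EuclideanSpace.single_apply]
    have h1 : (x + t • EuclideanSpace.single (0 : Fin 3) (1:ℝ)) 1 = x 1 := by
      simp [EuclideanSpace.single_apply]
    have h2 : (x + t • EuclideanSpace.single (0 : Fin 3) (1:ℝ)) 2 = x 2 := by
      simp [EuclideanSpace.single_apply]
    rw [h0, h1, h2]
    rfl
  rw [hpre]
  exact hcomp.measure_preimage (cauchy_slab_measurable R l hl).nullMeasurableSet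

lemma cauchy_tube_closed (R l : ℝ) (u : EuclideanSpace ℝ (Fin 3)) :
    IsClosed {x : EuclideanSpace ℝ (Fin 3) | ∃ t ∈ Set.Icc (0:ℝ) l,
      x + t • u ∈ closedBall (0 : EuclideanSpace ℝ (Fin 3)) R} := by
  have himg : {x : EuclideanSpace ℝ (Fin 3) | ∃ t ∈ Set.Icc (0:ℝ) l,
      x + t • u ∈ closedBall (0 : EuclideanSpace ℝ (Fin 3)) R}
      = (fun p : EuclideanSpace ℝ (Fin 3) × ℝ => p.1 - p.2 • u) ''
        ((closedBall (0 : EuclideanSpace ℝ (Fin 3)) R) ×ˢ (Set.Icc (0:ℝ) l)) := by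
    ext x
    constructor
    · rintro ⟨t, ht, hmem⟩
      exact ⟨(x + t • u, t), ⟨hmem, ht⟩, by simp⟩
    · rintro ⟨⟨y, t⟩, ⟨hy, ht⟩, rfl⟩
      exact ⟨t, ht, by simpa using hy⟩
  rw [himg]
  exact (((isCompact_closedBall _ _).prod isCompact_Icc).image
    (continuous_fst.sub (continuous_snd.smul continuous_const))).isClosed

lemma cauchy_N_eq (R l : ℝ) (hR : 0 < R) (hl : 0 < l) (u : EuclideanSpace ℝ (Fin 3)) :
    (∫⁻ x : EuclideanSpace ℝ (Fin 3),
        volume {t : ℝ | t ∈ Set.Icc (0 : ℝ) l ∧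
          x + t • u ∈ closedBall (0 : EuclideanSpace ℝ (Fin 3)) R})
    = volume (closedBall (0 : EuclideanSpace ℝ (Fin 3)) R) * ENNReal.ofReal l := by
  set S : Set (EuclideanSpace ℝ (Fin 3) × ℝ) :=
    {p | p.2 ∈ Set.Icc (0:ℝ) l ∧ p.1 + p.2 • u ∈ closedBall (0 : EuclideanSpace ℝ (Fin 3)) R}
    with hSdef
  have hSm : MeasurableSet S := by
    apply IsClosed.measurableSet
    exact (isClosed_Icc.preimage continuous_snd).inter
      (Metric.isClosed_closedBall.preimage (continuous_fst.add (continuous_snd.smul continuous_const)))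
  have h1 : (∫⁻ x : EuclideanSpace ℝ (Fin 3),
      volume {t : ℝ | t ∈ Set.Icc (0 : ℝ) l ∧
        x + t • u ∈ closedBall (0 : EuclideanSpace ℝ (Fin 3)) R})
      = (volume.prod volume) S := (Measure.prod_apply hSm).symm
  rw [h1, Measure.prod_apply_symm hSm]
  have h2 : ∀ t : ℝ, volume ((fun x => (x, t)) ⁻¹' S)
      = Set.indicator (Set.Icc (0:ℝ) l)
          (fun _ => volume (closedBall (0 : EuclideanSpace ℝ (Fin 3)) R)) t := by
    intro t
    by_cases ht : t ∈ Set.Icc (0:ℝ) l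
    · rw [Set.indicator_of_mem ht]
      have hpre : ((fun x => (x, t)) ⁻¹' S)
          = (fun x : EuclideanSpace ℝ (Fin 3) => x + t • u) ⁻¹'
              closedBall (0 : EuclideanSpace ℝ (Fin 3)) R := by
        ext x
        simp only [Set.mem_preimage, hSdef, Set.mem_setOf_eq, ht, true_and]
      rw [hpre]
      exact measure_preimage_add_right volume (t • u) _
    · rw [Set.indicator_of_notMem ht]
      have hpre : ((fun x => (x, t)) ⁻¹' S) = ∅ := by
        ext x
        simp only [Set.mem_preimage, hSdef, Set.mem_setOf_eq, ht, false_and,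
          Set.mem_empty_iff_false]
      rw [hpre, measure_empty]
  rw [lintegral_congr h2, lintegral_indicator_const measurableSet_Icc, Real.volume_Icc, sub_zero]

lemma cauchy_vol_ball3 (R : ℝ) (hR : 0 < R) :
    volume (closedBall (0 : EuclideanSpace ℝ (Fin 3)) R)
      = ENNReal.ofReal (R^3 * (Real.pi * (4/3))) := by
  rw [EuclideanSpace.volume_closedBall, Fintype.card_fin]
  have hsqrtpi : 0 < Real.sqrt Real.pi := Real.sqrt_pos.mpr Real.pi_pos
  have hg : Real.Gamma ((3:ℕ) / 2 + 1) = 3/4 * Real.sqrt Real.pi := by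
    have h32 : ((3:ℕ):ℝ) / 2 + 1 = 3/2 + 1 := by norm_num
    rw [h32, Real.Gamma_add_one (by norm_num)]
    have h12 : (3:ℝ)/2 = 1/2 + 1 := by norm_num
    rw [h12, Real.Gamma_add_one (by norm_num), Real.Gamma_one_half_eq]
    ring
  rw [hg]
  have hval : Real.sqrt Real.pi ^ (3:ℕ) / (3/4 * Real.sqrt Real.pi) = Real.pi * (4/3) := by
    rw [pow_succ, Real.sq_sqrt Real.pi_pos.le]
    rw [div_eq_iff (by positivity)]
    ring
  rw [hval, ← ENNReal.ofReal_pow hR.le, ← ENNReal.ofReal_mul (by positivity)]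

lemma cauchy_vol_disk (R : ℝ) (hR : 0 < R) :
    volume {y : Fin 2 → ℝ | (y 0)^2 + (y 1)^2 ≤ R^2}
      = ENNReal.ofReal (R^2 * Real.pi) := by
  have hpre : (⇑(MeasurableEquiv.toLp 2 (Fin 2 → ℝ)).symm) ⁻¹'
      {y : Fin 2 → ℝ | (y 0)^2 + (y 1)^2 ≤ R^2}
      = closedBall (0 : EuclideanSpace ℝ (Fin 2)) R := by
    ext v
    simp only [Set.mem_preimage, Set.mem_setOf_eq]
    rw [mem_closedBall_zero_iff]
    have hnorm : ‖v‖ = Real.sqrt ((v 0)^2 + (v 1)^2) := by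
      rw [EuclideanSpace.norm_eq]
      congr 1
      simp [Fin.sum_univ_two, sq_abs]
    have hveq : ∀ i : Fin 2, (MeasurableEquiv.toLp 2 (Fin 2 → ℝ)).symm v i = v i := fun _ => rfl
    rw [hveq 0, hveq 1, hnorm]
    constructor
    · intro h
      calc Real.sqrt ((v 0)^2 + (v 1)^2) ≤ Real.sqrt (R^2) := Real.sqrt_le_sqrt h
        _ = R := Real.sqrt_sq hR.le
    · intro h
      calc (v 0)^2 + (v 1)^2
          = (Real.sqrt ((v 0)^2 + (v 1)^2))^2 := (Real.sq_sqrt (by positivity)).symm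
        _ ≤ R^2 := pow_le_pow_left₀ (Real.sqrt_nonneg _) h 2
  rw [← (EuclideanSpace.volume_preserving_symm_measurableEquiv_toLp (ι := Fin 2)).measure_preimage
      (cauchy_disk_measurable R).nullMeasurableSet, hpre,
    EuclideanSpace.volume_closedBall, Fintype.card_fin]
  have hg : Real.Gamma ((2:ℕ) / 2 + 1) = 1 := by
    have h2 : ((2:ℕ):ℝ) / 2 + 1 = 2 := by norm_num
    rw [h2, Real.Gamma_two]
  rw [hg]
  have hpow : Real.sqrt Real.pi ^ (2:ℕ) = Real.pi := Real.sq_sqrt Real.pi_pos.le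
  rw [hpow, div_one, ← ENNReal.ofReal_pow hR.le, ← ENNReal.ofReal_mul (by positivity)]

end CauchyAux

theorem cauchy_formula_segments_ball
    (R l : ℝ) (hR : 0 < R) (hl : 0 < l)
    (u : EuclideanSpace ℝ (Fin 3)) (hu : ‖u‖ = 1)
    (N D : ENNReal)
    (hN : N = ∫⁻ x : EuclideanSpace ℝ (Fin 3),
        volume {t : ℝ | t ∈ Set.Icc (0 : ℝ) l ∧
          x + t • u ∈ closedBall (0 : EuclideanSpace ℝ (Fin 3)) R})
    (hD : D = volume {x : EuclideanSpace ℝ (Fin 3) |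
        ∃ t ∈ Set.Icc (0 : ℝ) l,
          x + t • u ∈ closedBall (0 : EuclideanSpace ℝ (Fin 3)) R}) :
    N / D = ENNReal.ofReal ((1 / l + 3 / (4 * R))⁻¹) := by
  classical
  have hcard : Module.finrank ℝ (EuclideanSpace ℝ (Fin 3)) = Fintype.card (Fin 3) :=
    finrank_euclideanSpace
  have horth : Orthonormal ℝ (Set.restrict {(0 : Fin 3)} (fun _ : Fin 3 => u)) := by
    rw [orthonormal_iff_ite]
    intro i j
    rw [Subsingleton.elim i j, if_pos rfl]
    simp only [Set.restrict, Set.domRestrict_apply]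
    rw [real_inner_self_eq_norm_sq, hu]
    norm_num
  obtain ⟨b, hb⟩ := horth.exists_orthonormalBasis_extension_of_card_eq hcard
  have hb0 : b 0 = u := hb 0 rfl
  have hNeq : N = volume (closedBall (0 : EuclideanSpace ℝ (Fin 3)) R) * ENNReal.ofReal l := by
    rw [hN]; exact cauchy_N_eq R l hR hl u
  have hDeq : D = ENNReal.ofReal l * ENNReal.ofReal (R^2 * Real.pi)
      + volume (closedBall (0 : EuclideanSpace ℝ (Fin 3)) R) := by
    have hDset : {x : EuclideanSpace ℝ (Fin 3) | ∃ t ∈ Set.Icc (0:ℝ) l,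
        x + t • u ∈ closedBall (0 : EuclideanSpace ℝ (Fin 3)) R}
        = ⇑b.repr ⁻¹' {y : EuclideanSpace ℝ (Fin 3) | ∃ t ∈ Set.Icc (0:ℝ) l,
            y + t • EuclideanSpace.single (0 : Fin 3) (1:ℝ)
              ∈ closedBall (0 : EuclideanSpace ℝ (Fin 3)) R} := by
      ext x
      simp only [Set.mem_setOf_eq, Set.mem_preimage]
      refine exists_congr fun t => and_congr_right fun _ => ?_
      rw [mem_closedBall_zero_iff, mem_closedBall_zero_iff,
        show b.repr x + t • EuclideanSpace.single (0 : Fin 3) (1:ℝ) = b.repr (x + t • u) by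
          rw [map_add, LinearIsometryEquiv.map_smul, ← hb0, b.repr_self],
        b.repr.norm_map]
    rw [hD, hDset,
      b.measurePreserving_repr.measure_preimage
        ((cauchy_tube_closed R l _).measurableSet.nullMeasurableSet),
      cauchy_volume_tube R l hR hl.le, cauchy_measure_slab R l hl.le]
    have hdm := cauchy_disk_measurable R
    have hsplit : ∀ y : Fin 2 → ℝ,
        Set.indicator {y : Fin 2 → ℝ | (y 0)^2 + (y 1)^2 ≤ R^2}
          (fun y => ENNReal.ofReal (l + 2 * Real.sqrt (R^2 - ((y 0)^2 + (y 1)^2)))) y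
        = Set.indicator {y : Fin 2 → ℝ | (y 0)^2 + (y 1)^2 ≤ R^2}
            (fun _ => ENNReal.ofReal l) y
          + Set.indicator {y : Fin 2 → ℝ | (y 0)^2 + (y 1)^2 ≤ R^2}
              (fun y => ENNReal.ofReal (0 + 2 * Real.sqrt (R^2 - ((y 0)^2 + (y 1)^2)))) y := by
      intro y
      by_cases hy : y ∈ {y : Fin 2 → ℝ | (y 0)^2 + (y 1)^2 ≤ R^2}
      · rw [Set.indicator_of_mem hy, Set.indicator_of_mem hy, Set.indicator_of_mem hy,
          zero_add, ← ENNReal.ofReal_add hl.le (by positivity)]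
      · rw [Set.indicator_of_notMem hy, Set.indicator_of_notMem hy,
          Set.indicator_of_notMem hy, add_zero]
    rw [lintegral_congr hsplit,
      lintegral_add_left (measurable_const.indicator hdm),
      lintegral_indicator_const hdm, cauchy_vol_disk R hR,
      ← cauchy_measure_slab R 0 le_rfl, ← cauchy_volume_tube R 0 hR le_rfl]
    congr 2
    ext x
    simp [Set.Icc_self]
  rw [hNeq, hDeq, cauchy_vol_ball3 R hR,
    ← ENNReal.ofReal_mul (by positivity : (0:ℝ) ≤ R^3 * (Real.pi * (4/3))),
    ← ENNReal.ofReal_mul hl.le,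
    ← ENNReal.ofReal_add (by positivity) (by positivity),
    ← ENNReal.ofReal_div_of_pos (by positivity)]
  congr 1
  have hpi := Real.pi_pos
  have hden : l * (R^2 * Real.pi) + R^3 * (Real.pi * (4/3)) ≠ 0 := by positivity
  have hinv : 1 / l + 3 / (4 * R) ≠ 0 := by positivity
  field_simp
  ring
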